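/- arXiv:1603.08655 — 3 statements merged into one kernel-verified Lean document; each statement's English description precedes it below -/
import Mathlib

section
/- Every galled network with n leaves has at most 2(n − 1) reticulation nodes. -/
/-!
Framework for rooted phylogenetic networks, formalized as directed graphs
given by an adjacency relation `A : V → V → Prop` on a vertex type `V`,
with a distinguished root `ρ`.  Leaves are identified with their (unique)
labels, i.e. the labelling is the identity on leaf vertices.
-/

namespace PhyloNet

variable {V : Type} {W : Type}

/-- Indegree of a vertex. -/
noncomputable def inDeg (A : V → V → Prop) (v : V) : ℕ := {u | A u v}.ncard

/-- Outdegree of a vertex. -/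
noncomputable def outDeg (A : V → V → Prop) (v : V) : ℕ := {w | A v w}.ncard

/-- `p` is a directed path (walk) from `u` to `v`, given as the list of its vertices. -/
def IsPath (A : V → V → Prop) (u v : V) (p : List V) : Prop :=
  p.Chain' A ∧ p.head? = some u ∧ p.getLast? = some v

/-- `A` with root `ρ` is a phylogenetic network: a finite rooted acyclic digraph whose
root has indegree 0 and outdegree ≥ 2, from which every node is reachable, and in which
every non-root node is either a leaf (indegree 1, outdegree 0), an internal tree node
(indegree 1, outdegree ≥ 2) or a reticulation (indegree ≥ 2, outdegree 1). -/
structure IsNetwork (A : V → V → Prop) (ρ : V) : Prop where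
  finite : Finite V
  acyclic : ∀ v, ¬ Relation.TransGen A v v
  root_indeg : inDeg A ρ = 0
  root_outdeg : 2 ≤ outDeg A ρ
  reach_from_root : ∀ v, Relation.ReflTransGen A ρ v
  degree_cond : ∀ v, v ≠ ρ →
    (inDeg A v = 1 ∧ (outDeg A v = 0 ∨ 2 ≤ outDeg A v)) ∨ (2 ≤ inDeg A v ∧ outDeg A v = 1)

/-- Reticulation node: indegree ≥ 2 and outdegree 1. -/
def IsRet (A : V → V → Prop) (v : V) : Prop := 2 ≤ inDeg A v ∧ outDeg A v = 1

/-- Leaf: indegree 1 and outdegree 0. -/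
def IsLeaf (A : V → V → Prop) (v : V) : Prop := inDeg A v = 1 ∧ outDeg A v = 0

/-- Tree node: any node that is not a reticulation node. -/
def IsTreeNode (A : V → V → Prop) (v : V) : Prop := ¬ IsRet A v

/-- `u` is visible on `v`: every directed path from the root `ρ` to `v` contains `u`. -/
def Visible (A : V → V → Prop) (ρ u v : V) : Prop := ∀ p, IsPath A ρ v p → u ∈ p

/-- A network is reticulation-visible if every reticulation node is visible on some leaf. -/
def RetVisible (A : V → V → Prop) (ρ : V) : Prop :=
  ∀ r, IsRet A r → ∃ ℓ, IsLeaf A ℓ ∧ Visible A ρ r ℓ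

/-- Undirected adjacency in the subgraph `N − R(N)` induced on tree nodes. -/
def TAdj (A : V → V → Prop) (u v : V) : Prop :=
  IsTreeNode A u ∧ IsTreeNode A v ∧ (A u v ∨ A v u)

/-- `S` is a tree node component: a connected component (ignoring directions) of the
subgraph induced on the tree nodes. -/
def IsTNC (A : V → V → Prop) (S : Set V) : Prop :=
  ∃ u, IsTreeNode A u ∧ S = {v | Relation.ReflTransGen (TAdj A) u v}

/-- `r` is the root of the tree node component `S`: it lies in `S` and has indegree 0
within `N − R(N)`, i.e. it has no tree-node parent. -/
def CompRoot (A : V → V → Prop) (S : Set V) (r : V) : Prop :=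
  r ∈ S ∧ ∀ u, IsTreeNode A u → ¬ A u r

/-- Tree node component `C'` is below tree node component `C''`. -/
def Below (A : V → V → Prop) (C' C'' : Set V) : Prop :=
  ∃ r, IsRet A r ∧ (∃ c, A r c ∧ CompRoot A C' c) ∧ (∃ p ∈ C'', A p r)

/-- A big tree node component: a tree node component with at least two nodes. -/
def BigTNC (A : V → V → Prop) (C : Set V) : Prop :=
  IsTNC A C ∧ ∃ a ∈ C, ∃ b ∈ C, a ≠ b

/-- A single-leaf component: its node set is `{ℓ}` for some leaf `ℓ`. -/
def SingleLeafTNC (A : V → V → Prop) (C : Set V) : Prop :=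
  ∃ ℓ, IsLeaf A ℓ ∧ C = {ℓ}

/-- A lowest big tree node component: a big tree node component `C` such that every
tree node component whose root is a proper descendant of the root of `C` is a
single-leaf component. -/
def LowestBig (A : V → V → Prop) (C : Set V) : Prop :=
  BigTNC A C ∧ ∀ C' r' rC, IsTNC A C' → CompRoot A C' r' → CompRoot A C rC →
    Relation.TransGen A rC r' → SingleLeafTNC A C'

/-- An inner reticulation: all of its parents lie in one and the same tree node component. -/
def InnerRet (A : V → V → Prop) (r : V) : Prop :=
  IsRet A r ∧ ∃ S, IsTNC A S ∧ ∀ p, A p r → p ∈ S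

/-- `IR(C)`: reticulations all of whose parents lie in `C`. -/
def IRset (A : V → V → Prop) (C : Set V) : Set V :=
  {r | IsRet A r ∧ ∀ p, A p r → p ∈ C}

/-- `CR(C)`: reticulations with at least one parent in `C` and at least one parent outside `C`. -/
def CRset (A : V → V → Prop) (C : Set V) : Set V :=
  {r | IsRet A r ∧ (∃ p, A p r ∧ p ∈ C) ∧ (∃ p, A p r ∧ p ∉ C)}

/-- `L_C`: the leaves of the network lying in `C` together with the children of the
inner reticulations below `C`. -/
def LCset (A : V → V → Prop) (C : Set V) : Set V :=
  {ℓ | ℓ ∈ C ∧ IsLeaf A ℓ} ∪ {x | ∃ r ∈ IRset A C, A r x}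

/-- Bicombining: every reticulation node has indegree exactly 2. -/
def Bicombining (A : V → V → Prop) : Prop := ∀ r, IsRet A r → inDeg A r = 2

/-- Galled: every reticulation node `r` has an ancestor `u` admitting two
internal-node-disjoint directed paths from `u` to `r` in which every node other
than `r` is a tree node. -/
def Galled (A : V → V → Prop) : Prop :=
  ∀ r, IsRet A r → ∃ u, Relation.TransGen A u r ∧ ∃ p₁ p₂ : List V,
    IsPath A u r p₁ ∧ IsPath A u r p₂ ∧ p₁ ≠ p₂ ∧
    (∀ x, x ∈ p₁ → x ∈ p₂ → x = u ∨ x = r) ∧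
    (∀ x ∈ p₁, x ≠ r → IsTreeNode A x) ∧ (∀ x ∈ p₂, x ≠ r → IsTreeNode A x)

/-- Restriction of a digraph to a vertex subset. -/
def Restrict (A : V → V → Prop) (S : Set V) : V → V → Prop :=
  fun a b => a ∈ S ∧ b ∈ S ∧ A a b

/-- Descendants of `u` (including `u`); the vertex set of the subnetwork `D_N(u)`. -/
def Desc (A : V → V → Prop) (u : V) : Set V := {v | Relation.ReflTransGen A u v}

/-- Binary network: the root has outdegree 2, leaves have degree 1, and every other
node has total degree 3. -/
def IsBinary (A : V → V → Prop) (ρ : V) : Prop :=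
  outDeg A ρ = 2 ∧ ∀ v, v ≠ ρ →
    (inDeg A v = 1 ∧ outDeg A v = 0) ∨ (inDeg A v = 1 ∧ outDeg A v = 2) ∨
    (inDeg A v = 2 ∧ outDeg A v = 1)

/-- A phylogenetic tree: a network with no reticulation nodes. -/
def IsPhyloTree (A : W → W → Prop) (ρ : W) : Prop :=
  IsNetwork A ρ ∧ ∀ w, ¬ IsRet A w

/-- A node with indegree 1 and outdegree 1 (a suppressible node). -/
def Deg11 (A : V → V → Prop) (v : V) : Prop := inDeg A v = 1 ∧ outDeg A v = 1

/-- There is a directed path from `a` to `b` (of length ≥ 1) all of whose internal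
nodes are suppressible. -/
def SubdivPath (A : V → V → Prop) (a b : V) : Prop :=
  ∃ p : List V, IsPath A a b p ∧ 2 ≤ p.length ∧ ∀ z ∈ p, z ≠ a → z ≠ b → Deg11 A z

/-- `φ` witnesses that the digraph `A'` on the vertex set `S` is a subdivision of the
tree `AT` restricted to the vertex set `SW`: `φ` injectively maps the tree nodes onto
the non-suppressible nodes, edges of the tree correspond exactly to directed paths
whose internal nodes are suppressible, and leaves are mapped according to the leaf
correspondence `θ` (same labels). -/
def SubdivWitness (A' : V → V → Prop) (S : Set V) (AT : W → W → Prop) (SW : Set W)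
    (θ : W → V) (φ : W → V) : Prop :=
  Set.InjOn φ SW ∧ (∀ w ∈ SW, φ w ∈ S) ∧
  (∀ x ∈ S, ¬ Deg11 (Restrict A' S) x → ∃ w ∈ SW, φ w = x) ∧
  (∀ x ∈ SW, ∀ y ∈ SW, (Restrict AT SW x y ↔ SubdivPath (Restrict A' S) (φ x) (φ y))) ∧
  (∀ w ∈ SW, outDeg (Restrict AT SW) w = 0 → φ w = θ w)

/-- The digraph `A'` on vertex set `S` is a subdivision of the tree `AT` on `SW`. -/
def IsSubdivisionOf (A' : V → V → Prop) (S : Set V) (AT : W → W → Prop) (SW : Set W)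
    (θ : W → V) : Prop :=
  ∃ φ, SubdivWitness A' S AT SW θ φ

/-- `E`, `D`, `φ` witness that the subnetwork of `A` on vertex set `S` displays the
subtree of `AT` on vertex set `SW`: `E` is a set of reticulation edges of the
subnetwork containing all but one of the incoming edges of each reticulation node of
the subnetwork, `D` is a set of deleted nodes, and `φ` witnesses that the result is a
subdivision of the subtree. -/
def DisplayWitness (A : V → V → Prop) (S : Set V) (AT : W → W → Prop) (SW : Set W)
    (θ : W → V) (E : Set (V × V)) (D : Set V) (φ : W → V) : Prop :=
  (∀ e ∈ E, Restrict A S e.1 e.2 ∧ 2 ≤ inDeg (Restrict A S) e.2) ∧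
  (∀ r ∈ S, 2 ≤ inDeg (Restrict A S) r →
     ∃ p, Restrict A S p r ∧ (p, r) ∉ E ∧ ∀ q, Restrict A S q r → q ≠ p → (q, r) ∈ E) ∧
  SubdivWitness (fun a b => Restrict A S a b ∧ (a, b) ∉ E) (S \ D) AT SW θ φ

/-- The subnetwork of `A` on vertex set `S` displays the subtree of `AT` on `SW`. -/
def DisplaysOn (A : V → V → Prop) (S : Set V) (AT : W → W → Prop) (SW : Set W)
    (θ : W → V) : Prop :=
  ∃ E D φ, DisplayWitness A S AT SW θ E D φ

/-- The leaves of the subnetwork of `A` induced on vertex set `S`. -/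
def SubLeaves (A : V → V → Prop) (S : Set V) : Set V :=
  {v | v ∈ S ∧ outDeg (Restrict A S) v = 0}

/-- `B` is a soft cluster in the subnetwork of `A` on vertex set `S`: `B` is the
cluster of some node of some phylogenetic tree displayed by that subnetwork. -/
def SoftClusterOn (A : V → V → Prop) (S : Set V) (B : Set V) : Prop :=
  ∃ (W : Type) (AT : W → W → Prop) (ρT : W) (θ : W → V),
    IsPhyloTree AT ρT ∧
    Set.BijOn θ {w | IsLeaf AT w} (SubLeaves A S) ∧
    DisplaysOn A S AT Set.univ θ ∧
    ∃ x : W, θ '' {w | IsLeaf AT w ∧ Relation.ReflTransGen AT x w} = B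

/-- `B` is a soft cluster of the node `u` of `N`: there are `E` and `D` as in the
definition of display such that `u` is a node of `(N − E) − D` and the set of leaves
of `N` below `u` in `(N − E) − D` equals `B`. -/
def SoftClusterAt (A : V → V → Prop) (u : V) (B : Set V) : Prop :=
  ∃ (E : Set (V × V)) (D : Set V),
    (∀ e ∈ E, A e.1 e.2 ∧ 2 ≤ inDeg A e.2) ∧
    (∀ r, 2 ≤ inDeg A r → ∃ p, A p r ∧ (p, r) ∉ E ∧ ∀ q, A q r → q ≠ p → (q, r) ∈ E) ∧
    (∃ (W : Type) (AT : W → W → Prop) (ρT : W) (θ : W → V),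
      IsPhyloTree AT ρT ∧ Set.BijOn θ {w | IsLeaf AT w} {v | IsLeaf A v} ∧
      IsSubdivisionOf (fun a b => A a b ∧ (a, b) ∉ E) (Set.univ \ D) AT Set.univ θ) ∧
    u ∉ D ∧
    {ℓ | IsLeaf A ℓ ∧
      Relation.ReflTransGen (fun a b => A a b ∧ (a, b) ∉ E ∧ a ∉ D ∧ b ∉ D) u ℓ} = B

/-- `w` is the lowest common ancestor of the set `X` in the (tree-like) digraph `A`. -/
def IsLCAIn (A : V → V → Prop) (X : Set V) (w : V) : Prop :=
  (∀ x ∈ X, Relation.ReflTransGen A w x) ∧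
  ∀ w', (∀ x ∈ X, Relation.ReflTransGen A w' x) → Relation.ReflTransGen A w' w

end PhyloNet

namespace PhyloNet

section Aux8

open Relation List

variable {V : Type}

/-- Everything in a chain is TransGen-reachable from the head. -/
private lemma chain_transGen {A : V → V → Prop} {a : V} {l : List V} (h : List.Chain A a l) :
    ∀ x ∈ l, Relation.TransGen A a x := by
  induction l generalizing a with
  | nil => simp
  | cons b l ih =>
    have h' : List.IsChain A (a :: b :: l) := h
    have hab : A a b := (List.isChain_cons_cons.1 h').1
    have ih := @ih b (List.isChain_cons_cons.1 h').2
    intro x hx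
    rcases List.mem_cons.1 hx with rfl | hx
    · exact TransGen.single hab
    · exact (TransGen.single hab).trans (ih x hx)

/-- A chain in an acyclic digraph has no duplicates. -/
private lemma chain'_nodup {A : V → V → Prop} (hA : ∀ v, ¬ Relation.TransGen A v v) :
    ∀ {p : List V}, p.Chain' A → p.Nodup := by
  intro p
  induction p with
  | nil => intro _; exact List.nodup_nil
  | cons a l ih =>
    intro hp
    have hc : List.Chain A a l := hp
    have hl : l.Chain' A := hp.tail
    refine List.nodup_cons.2 ⟨?_, ih hl⟩
    intro hal
    exact hA a (chain_transGen hc a hal)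

private lemma chain_restrict {A : V → V → Prop} {P : V → Prop} :
    ∀ {a : V} {l : List V}, List.Chain A a l → (∀ x ∈ a :: l, P x) →
      List.Chain (fun x y => A x y ∧ P x ∧ P y) a l := by
  intro a l h hP
  induction l generalizing a with
  | nil => exact List.IsChain.singleton a
  | cons b l ih =>
    have h' : List.IsChain A (a :: b :: l) := h
    have hab : A a b := (List.isChain_cons_cons.1 h').1
    have ih := fun hP' => @ih b (List.isChain_cons_cons.1 h').2 hP'
    refine List.IsChain.cons_cons ⟨hab, hP a (by simp), hP b (by simp)⟩ (ih ?_)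
    intro x hx
    exact hP x (by simp only [List.mem_cons] at hx ⊢; tauto)

private lemma reflTransGen_of_chain' {A : V → V → Prop} {a b : V} {l : List V} (hc : l.Chain' A)
    (hh : l.head? = some a) (hl : l.getLast? = some b) : Relation.ReflTransGen A a b := by
  cases l with
  | nil => simp at hh
  | cons x t =>
    have hxa : x = a := by simpa using hh
    subst hxa
    have hlast : (x :: t).getLast (List.cons_ne_nil _ _) = b := by
      have h := List.getLast?_eq_getLast (l := x :: t) (List.cons_ne_nil _ _)
      rw [h] at hl; exact (Option.some_injective _ hl)
    exact List.relationReflTransGen_of_exists_isChain_cons t hc hlast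

private lemma path_snoc {A : V → V → Prop} {u v : V} {p : List V} (hc : p.Chain' A)
    (hh : p.head? = some u) (hl : p.getLast? = some v) (huv : u ≠ v) :
    ∃ q x, p = q ++ [x, v] ∧ A x v ∧ (q ++ [x]).Chain' A ∧ (q ++ [x]).head? = some u ∧
      (q ++ [x]).getLast? = some x := by
  rcases List.eq_nil_or_concat p with rfl | ⟨L, b, rfl⟩
  · simp at hh
  · rw [List.concat_eq_append] at *
    have hbv : b = v := by simpa using hl
    subst hbv
    rcases List.eq_nil_or_concat L with rfl | ⟨Q, x, rfl⟩
    · have : b = u := by simpa using hh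
      exact absurd this.symm huv
    · rw [List.concat_eq_append] at *
      refine ⟨Q, x, by simp, ?_, (List.isChain_append.1 hc).1, ?_, by simp⟩
      · have h3 := (List.isChain_append.1 hc).2.2
        exact h3 x (by simp) b (by simp)
      · rwa [List.head?_append_of_ne_nil _ (by simp)] at hh

/-- Directed tree edge: an edge between two tree nodes. -/
def TEdge (A : V → V → Prop) (a b : V) : Prop := A a b ∧ IsTreeNode A a ∧ IsTreeNode A b

/-- `h` is the head of the tree-node component of `v`. -/
def IsHead (A : V → V → Prop) (h v : V) : Prop :=
  Relation.ReflTransGen (TEdge A) h v ∧ ∀ p, ¬ TEdge A p h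

variable {A : V → V → Prop} {ρ : V}

private lemma no_parent_root [Finite V] (hN : IsNetwork A ρ) : ∀ u, ¬ A u ρ := by
  have h0 : {u | A u ρ}.ncard = 0 := hN.root_indeg
  have he : {u | A u ρ} = ∅ := (Set.ncard_eq_zero (Set.toFinite _)).1 h0
  intro u hu
  exact absurd (he ▸ hu : u ∈ (∅ : Set V)) (Set.notMem_empty u)

private lemma root_tree (hN : IsNetwork A ρ) : IsTreeNode A ρ := by
  intro hret
  have := hret.1
  rw [hN.root_indeg] at this
  omega

private lemma unique_parent [Finite V] (hN : IsNetwork A ρ) {v : V} (hv : v ≠ ρ)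
    (ht : IsTreeNode A v) : ∃ a, {u | A u v} = {a} := by
  rcases hN.degree_cond v hv with ⟨h1, _⟩ | hret
  · exact Set.ncard_eq_one.1 h1
  · exact absurd hret ht

private lemma wf_up [Finite V] (hN : IsNetwork A ρ) :
    WellFounded (fun a b : V => Relation.TransGen A a b) := by
  letI : IsTrans V (fun a b : V => Relation.TransGen A a b) := ⟨fun _ _ _ => TransGen.trans⟩
  letI : IsIrrefl V (fun a b : V => Relation.TransGen A a b) := ⟨hN.acyclic⟩
  exact Finite.wellFounded_of_trans_of_irrefl _

private lemma wf_down [Finite V] (hN : IsNetwork A ρ) :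
    WellFounded (fun a b : V => Relation.TransGen A b a) := by
  letI : IsTrans V (fun a b : V => Relation.TransGen A b a) := ⟨fun _ _ _ h1 h2 => h2.trans h1⟩
  letI : IsIrrefl V (fun a b : V => Relation.TransGen A b a) := ⟨hN.acyclic⟩
  exact Finite.wellFounded_of_trans_of_irrefl _

private lemma head_exists [Finite V] (hN : IsNetwork A ρ) :
    ∀ v, IsTreeNode A v → ∃ h, IsHead A h v := by
  intro v
  induction v using (wf_up hN).induction with
  | _ v ih =>
    intro htv
    by_cases hp : ∃ p, TEdge A p v
    · obtain ⟨p, hpe⟩ := hp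
      obtain ⟨h, hh⟩ := ih p (TransGen.single hpe.1) hpe.2.1
      exact ⟨h, hh.1.tail hpe, hh.2⟩
    · exact ⟨v, ReflTransGen.refl, fun p hpe => hp ⟨p, hpe⟩⟩

private lemma head_unique [Finite V] (hN : IsNetwork A ρ) :
    ∀ v h h', IsHead A h v → IsHead A h' v → h = h' := by
  intro v
  induction v using (wf_up hN).induction with
  | _ v ih =>
    intro h h' hh hh'
    rcases hh.1.cases_tail with rfl | ⟨c, hchain, hcv⟩
    · rcases hh'.1.cases_tail with rfl | ⟨c', _, hc'v⟩
      · rfl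
      · exact absurd hc'v (hh.2 c')
    · rcases hh'.1.cases_tail with rfl | ⟨c', hchain', hc'v⟩
      · exact absurd hcv (hh'.2 c)
      · have hvρ : v ≠ ρ := fun h => no_parent_root hN c (h ▸ hcv.1)
        obtain ⟨a, ha⟩ := unique_parent hN hvρ hcv.2.2
        have hc : c = a := by
          have h1 : c ∈ {u | A u v} := hcv.1
          rw [ha] at h1; simpa using h1
        have hc' : c' = a := by
          have h1 : c' ∈ {u | A u v} := hc'v.1
          rw [ha] at h1; simpa using h1
        have hcc : c' = c := hc'.trans hc.symm
        rw [hcc] at hchain'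
        exact ih c (TransGen.single hcv.1) h h' ⟨hchain, hh.2⟩ ⟨hchain', hh'.2⟩

open Classical in
/-- The head of the tree-node component of `v`. -/
noncomputable def hd (A : V → V → Prop) (v : V) : V :=
  if h : ∃ hh, IsHead A hh v then h.choose else v

private lemma hd_isHead [Finite V] (hN : IsNetwork A ρ) {v : V} (ht : IsTreeNode A v) :
    IsHead A (hd A v) v := by
  rw [hd, dif_pos (head_exists hN v ht)]
  exact (head_exists hN v ht).choose_spec

private lemma hd_eq [Finite V] (hN : IsNetwork A ρ) {v h : V} (ht : IsTreeNode A v)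
    (hh : IsHead A h v) : hd A v = h :=
  head_unique hN v _ _ (hd_isHead hN ht) hh

private lemma isHead_tree {h v : V} (hh : IsHead A h v) (ht : IsTreeNode A v) :
    IsTreeNode A h := by
  rcases hh.1.cases_head with rfl | ⟨c, hc, _⟩
  · exact ht
  · exact hc.2.1

private lemma hd_parent_eq [Finite V] (hN : IsNetwork A ρ) {p v : V} (he : TEdge A p v) :
    hd A v = hd A p := by
  have h1 : IsHead A (hd A p) p := hd_isHead hN he.2.1
  exact hd_eq hN he.2.2 ⟨h1.1.tail he, h1.2⟩

private lemma hd_chain [Finite V] (hN : IsNetwork A ρ) {u x : V}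
    (hch : Relation.ReflTransGen (TEdge A) u x) : hd A u = hd A x := by
  induction hch with
  | refl => rfl
  | @tail b c _ e ih => rw [ih, ← hd_parent_eq hN e]

private lemma snoc_head_eq_nil {p q : List V} {x r u : V} (hpe : p = q ++ [x, r])
    (hnd : p.Nodup) (hh : (q ++ [x]).head? = some u) (hxu : x = u) : p = [x, r] := by
  cases q with
  | nil => simpa using hpe
  | cons a t =>
    exfalso
    have hau : a = u := by simpa using hh
    have hax : a = x := by rw [hau, hxu]
    subst hax
    rw [hpe] at hnd
    have h1 : a ∉ t ++ [a, r] := (List.nodup_cons.1 hnd).1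
    exact h1 (by simp)

private lemma gall_parents [Finite V] (hN : IsNetwork A ρ) (hbi : Bicombining A)
    (hg : Galled A) {r : V} (hr : IsRet A r) :
    ∃ a b : V, a ≠ b ∧ {p | A p r} = {a, b} ∧ IsTreeNode A a ∧ IsTreeNode A b ∧
      hd A a = hd A b := by
  obtain ⟨u, hur, p₁, p₂, hp₁, hp₂, hne, hdisj, ht₁, ht₂⟩ := hg r hr
  have hu_ne_r : u ≠ r := fun h => hN.acyclic r (h ▸ hur)
  obtain ⟨q₁, x₁, hpe₁, hx₁r, hc₁, hh₁, hl₁⟩ := path_snoc hp₁.1 hp₁.2.1 hp₁.2.2 hu_ne_r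
  obtain ⟨q₂, x₂, hpe₂, hx₂r, hc₂, hh₂, hl₂⟩ := path_snoc hp₂.1 hp₂.2.1 hp₂.2.2 hu_ne_r
  have hnd₁ : p₁.Nodup := chain'_nodup hN.acyclic hp₁.1
  have hnd₂ : p₂.Nodup := chain'_nodup hN.acyclic hp₂.1
  have hx₁_ne_r : x₁ ≠ r := fun h => hN.acyclic r (Relation.TransGen.single (show A r r from h ▸ hx₁r))
  have hx₂_ne_r : x₂ ≠ r := fun h => hN.acyclic r (Relation.TransGen.single (show A r r from h ▸ hx₂r))
  have hmem₁ : x₁ ∈ p₁ := by rw [hpe₁]; simp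
  have hmem₂ : x₂ ∈ p₂ := by rw [hpe₂]; simp
  have htx₁ : IsTreeNode A x₁ := ht₁ x₁ hmem₁ hx₁_ne_r
  have htx₂ : IsTreeNode A x₂ := ht₂ x₂ hmem₂ hx₂_ne_r
  have hx₁x₂ : x₁ ≠ x₂ := by
    intro heq
    have hm2 : x₁ ∈ p₂ := heq ▸ hmem₂
    rcases hdisj x₁ hmem₁ hm2 with hxu | hxr
    · have e₁ : p₁ = [x₁, r] := snoc_head_eq_nil hpe₁ hnd₁ hh₁ hxu
      have e₂ : p₂ = [x₂, r] := snoc_head_eq_nil hpe₂ hnd₂ hh₂ (heq ▸ hxu)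
      exact hne (by rw [e₁, e₂, heq])
    · exact hx₁_ne_r hxr
  have hP : {p | A p r}.ncard = 2 := hbi r hr
  have hsub : {x₁, x₂} ⊆ {p | A p r} := by
    intro z hz
    rcases hz with rfl | hz
    · exact hx₁r
    · exact (Set.mem_singleton_iff.1 hz) ▸ hx₂r
  have hset : {x₁, x₂} = {p | A p r} :=
    Set.eq_of_subset_of_ncard_le hsub (by rw [hP, Set.ncard_pair hx₁x₂]) (Set.toFinite _)
  -- both partial paths consist of tree nodes
  have key : ∀ (p q : List V) (x : V), p = q ++ [x, r] → p.Nodup →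
      (q ++ [x]).Chain' A → (q ++ [x]).head? = some u → (q ++ [x]).getLast? = some x →
      (∀ y ∈ p, y ≠ r → IsTreeNode A y) →
      Relation.ReflTransGen (TEdge A) u x := by
    intro p q x hpe hnd hc hh hl htree
    have hrnot : r ∉ q ++ [x] := by
      intro hrm
      rw [hpe] at hnd
      have h2 : ((q ++ [x]) ++ [r]).Nodup := by simpa using hnd
      have := (List.nodup_append.1 h2).2.2
      exact this r hrm r (by simp) rfl
    have hall : ∀ y ∈ q ++ [x], IsTreeNode A y := by
      intro y hy
      refine htree y ?_ ?_
      · rw [hpe]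
        have : y ∈ (q ++ [x]) ++ [r] := List.mem_append_left _ hy
        simpa using this
      · rintro rfl; exact hrnot hy
    obtain ⟨t, ht'⟩ : ∃ t, q ++ [x] = u :: t := by
      cases hq : q ++ [x] with
      | nil => rw [hq] at hh; simp at hh
      | cons a t =>
        rw [hq] at hh
        exact ⟨t, by simpa using hh⟩
    have hchain : List.Chain A u t := by rw [ht'] at hc; exact hc
    have hallc : ∀ y ∈ u :: t, IsTreeNode A y := by rw [← ht']; exact hall
    have chainT : List.Chain (TEdge A) u t := by
      have := chain_restrict (P := IsTreeNode A) hchain hallc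
      exact this
    have hlast : (u :: t).getLast (List.cons_ne_nil _ _) = x := by
      rw [ht'] at hl
      have h := List.getLast?_eq_getLast (l := u :: t) (List.cons_ne_nil _ _)
      rw [h] at hl
      exact Option.some_injective _ hl
    exact List.relationReflTransGen_of_exists_isChain_cons t chainT hlast
  have hdu₁ : hd A u = hd A x₁ := hd_chain hN (key p₁ q₁ x₁ hpe₁ hnd₁ hc₁ hh₁ hl₁ ht₁)
  have hdu₂ : hd A u = hd A x₂ := hd_chain hN (key p₂ q₂ x₂ hpe₂ hnd₂ hc₂ hh₂ hl₂ ht₂)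
  exact ⟨x₁, x₂, hx₁x₂, hset.symm, htx₁, htx₂, by rw [← hdu₁, hdu₂]⟩

private lemma ret_parent_tree [Finite V] (hN : IsNetwork A ρ) (hbi : Bicombining A)
    (hg : Galled A) {r p : V} (hr : IsRet A r) (hpr : A p r) : IsTreeNode A p := by
  obtain ⟨a, b, _, hset, hta, htb, _⟩ := gall_parents hN hbi hg hr
  have : p ∈ ({a, b} : Set V) := hset ▸ (hpr : p ∈ {q | A q r})
  rcases this with rfl | hp
  · exact hta
  · exact (Set.mem_singleton_iff.1 hp) ▸ htb

open Classical in
/-- The unique child of a node of outdegree one. -/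
noncomputable def chld (A : V → V → Prop) (v : V) : V :=
  if h : ∃ c, A v c then h.choose else v

private lemma chld_spec [Finite V] {v : V} (hv : outDeg A v = 1) :
    A v (chld A v) ∧ ∀ w, A v w → w = chld A v := by
  obtain ⟨c, hc⟩ := Set.ncard_eq_one.1 hv
  have hex : ∃ w, A v w := ⟨c, by rw [show A v c ↔ c ∈ {w | A v w} from Iff.rfl, hc]; rfl⟩
  constructor
  · rw [chld, dif_pos hex]; exact hex.choose_spec
  · intro w hw
    rw [chld, dif_pos hex]
    have h1 : w ∈ ({c} : Set V) := hc ▸ (hw : w ∈ {w | A v w})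
    have h2 : hex.choose ∈ ({c} : Set V) := hc ▸ (hex.choose_spec : hex.choose ∈ {w | A v w})
    rw [Set.mem_singleton_iff.1 h1, Set.mem_singleton_iff.1 h2]

private lemma ret_child [Finite V] (hN : IsNetwork A ρ) (hbi : Bicombining A)
    (hg : Galled A) {r : V} (hr : IsRet A r) :
    IsTreeNode A (chld A r) ∧ (∀ p, ¬ TEdge A p (chld A r)) ∧ {p | A p (chld A r)} = {r} := by
  obtain ⟨hrc, _⟩ := chld_spec (v := r) hr.2
  set c := chld A r with hc
  have htc : IsTreeNode A c := by
    intro hretc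
    exact (ret_parent_tree hN hbi hg hretc hrc) hr
  have hcρ : c ≠ ρ := fun h => no_parent_root hN r (h ▸ hrc)
  obtain ⟨a, ha⟩ := unique_parent hN hcρ htc
  have har : a = r := by
    have h1 : r ∈ ({a} : Set V) := ha ▸ (hrc : r ∈ {u | A u c})
    exact (Set.mem_singleton_iff.1 h1).symm
  subst har
  have hpar : {p | A p c} = {a} := ha
  refine ⟨htc, ?_, hpar⟩
  intro p hpe
  have h1 : p ∈ ({a} : Set V) := hpar ▸ (hpe.1 : p ∈ {u | A u c})
  rw [Set.mem_singleton_iff.1 h1] at hpe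
  exact hpe.2.1 hr

/-- Parent-less tree nodes: the heads of the tree-node components. -/
def PHd (A : V → V → Prop) : Set V := {h | IsTreeNode A h ∧ ∀ p, ¬ TEdge A p h}

private lemma phd_eq [Finite V] (hN : IsNetwork A ρ) (hbi : Bicombining A) (hg : Galled A) :
    PHd A = {ρ} ∪ (chld A) '' {r | IsRet A r} := by
  ext h
  constructor
  · rintro ⟨ht, hp⟩
    by_cases hρ : h = ρ
    · exact Or.inl hρ
    · right
      obtain ⟨q, hq⟩ := unique_parent hN hρ ht
      have hqh : A q h := by
        have : q ∈ ({q} : Set V) := rfl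
        rw [← hq] at this; exact this
      have hqret : IsRet A q := by
        by_contra hq'
        exact hp q ⟨hqh, hq', ht⟩
      refine ⟨q, hqret, ?_⟩
      exact ((chld_spec hqret.2).2 h hqh).symm
  · rintro (rfl | ⟨q, hq, rfl⟩)
    · exact ⟨root_tree hN, fun p hpe => no_parent_root hN p hpe.1⟩
    · obtain ⟨h1, h2, _⟩ := ret_child hN hbi hg hq
      exact ⟨h1, h2⟩

private lemma phd_ncard [Finite V] (hN : IsNetwork A ρ) (hbi : Bicombining A) (hg : Galled A) :
    (PHd A).ncard = {r | IsRet A r}.ncard + 1 := by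
  rw [phd_eq hN hbi hg]
  have hdisj : Disjoint ({ρ} : Set V) ((chld A) '' {r | IsRet A r}) := by
    rw [Set.disjoint_left]
    rintro x rfl ⟨q, hq, hcq⟩
    exact no_parent_root hN q (hcq ▸ (chld_spec hq.2).1)
  have hinj : Set.InjOn (chld A) {r | IsRet A r} := by
    intro r hr r' hr' heq
    have h1 := (ret_child hN hbi hg hr).2.2
    have h2 := (ret_child hN hbi hg hr').2.2
    rw [heq] at h1
    rw [h1] at h2
    exact Set.singleton_eq_singleton_iff.1 h2
  rw [Set.ncard_union_eq hdisj (Set.toFinite _) (Set.toFinite _),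
    Set.ncard_image_of_injOn hinj, Set.ncard_singleton, add_comm]

open Classical in
/-- The head of the component containing the parents of a reticulation. -/
noncomputable def FHd (A : V → V → Prop) (r : V) : V :=
  hd A (if h : ∃ p, A p r then h.choose else r)

private lemma FHd_eq [Finite V] (hN : IsNetwork A ρ) (hbi : Bicombining A) (hg : Galled A)
    {r p : V} (hr : IsRet A r) (hpr : A p r) : hd A p = FHd A r := by
  classical
  have hex : ∃ q, A q r := ⟨p, hpr⟩
  have hq : A hex.choose r := hex.choose_spec
  rw [FHd, dif_pos hex]
  obtain ⟨a, b, _, hset, _, _, hab⟩ := gall_parents hN hbi hg hr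
  have hmem : ∀ z, A z r → hd A z = hd A a := by
    intro z hz
    have : z ∈ ({a, b} : Set V) := hset ▸ (hz : z ∈ {q | A q r})
    rcases this with rfl | hzz
    · rfl
    · rw [Set.mem_singleton_iff.1 hzz, hab]
  rw [hmem p hpr, hmem hex.choose hq]

private lemma FHd_mem [Finite V] (hN : IsNetwork A ρ) (hbi : Bicombining A) (hg : Galled A)
    {r : V} (hr : IsRet A r) : FHd A r ∈ PHd A := by
  have h2 : 0 < inDeg A r := by have := hr.1; omega
  have hne : {p | A p r}.Nonempty := by
    rw [Set.nonempty_iff_ne_empty]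
    intro he
    rw [show inDeg A r = ({p | A p r} : Set V).ncard from rfl, he, Set.ncard_empty] at h2
    omega
  obtain ⟨p, hp⟩ := hne
  have htp : IsTreeNode A p := ret_parent_tree hN hbi hg hr hp
  rw [← FHd_eq hN hbi hg hr hp]
  have hh : IsHead A (hd A p) p := hd_isHead hN htp
  exact ⟨isHead_tree hh htp, hh.2⟩

private lemma small_fiber [Finite V] (hN : IsNetwork A ρ) (hbi : Bicombining A) (hg : Galled A)
    {h : V} (hh : h ∈ PHd A) (hsf : {r | IsRet A r ∧ FHd A r = h}.ncard ≤ 1) :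
    ∃ ℓ, IsLeaf A ℓ ∧ hd A ℓ = h := by
  set Cmp := {v | Relation.ReflTransGen (TEdge A) h v} with hCmp
  have hhC : h ∈ Cmp := Relation.ReflTransGen.refl
  obtain ⟨m, hmC, hmin⟩ := (wf_down hN).has_min Cmp ⟨h, hhC⟩
  have htm : IsTreeNode A m := by
    rcases (hmC : Relation.ReflTransGen (TEdge A) h m).cases_tail with rfl | ⟨c, _, hcm⟩
    · exact hh.1
    · exact hcm.2.2
  have hhm : hd A m = h := hd_eq hN htm ⟨hmC, hh.2⟩
  have hchild : ∀ w, A m w → IsRet A w := by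
    intro w hw
    by_contra hwt
    have hwC : w ∈ Cmp := (hmC : Relation.ReflTransGen (TEdge A) h m).tail ⟨hw, htm, hwt⟩
    exact hmin w hwC (Relation.TransGen.single hw)
  by_cases hout : outDeg A m = 0
  · have hmρ : m ≠ ρ := by
      intro he
      have := hN.root_outdeg
      rw [← he, hout] at this
      omega
    rcases hN.degree_cond m hmρ with ⟨h1, _⟩ | hret
    · exact ⟨m, ⟨h1, hout⟩, hhm⟩
    · exact absurd hret htm
  · have hout2 : 2 ≤ outDeg A m := by
      by_cases hmρ : m = ρ
      · rw [hmρ]; exact hN.root_outdeg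
      · rcases hN.degree_cond m hmρ with ⟨_, h2⟩ | hret
        · rcases h2 with h2 | h2
          · exact absurd h2 hout
          · exact h2
        · exact absurd hret htm
    have h1lt : 1 < ({w | A m w} : Set V).ncard := by
      rw [show outDeg A m = ({w | A m w} : Set V).ncard from rfl] at hout2
      omega
    obtain ⟨c₁, hc₁, c₂, hc₂, hcc⟩ := (Set.one_lt_ncard (Set.toFinite _)).1 h1lt
    have hr₁ : IsRet A c₁ := hchild c₁ hc₁
    have hr₂ : IsRet A c₂ := hchild c₂ hc₂
    have hf₁ : FHd A c₁ = h := by rw [← FHd_eq hN hbi hg hr₁ hc₁, hhm]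
    have hf₂ : FHd A c₂ = h := by rw [← FHd_eq hN hbi hg hr₂ hc₂, hhm]
    exfalso
    have hsub : ({c₁, c₂} : Set V) ⊆ {r | IsRet A r ∧ FHd A r = h} := by
      intro z hz
      rcases hz with rfl | hz
      · exact ⟨hr₁, hf₁⟩
      · rw [Set.mem_singleton_iff.1 hz]; exact ⟨hr₂, hf₂⟩
    have := Set.ncard_le_ncard hsub (Set.toFinite _)
    rw [Set.ncard_pair hcc] at this
    omega

end Aux8

end PhyloNet
namespace PhyloNet

/-- Every galled network with `n` leaves has at most `2(n − 1)` reticulation nodes. -/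
theorem galled_ret_bound {V : Type} (A : V → V → Prop) (ρ : V)
    (hN : IsNetwork A ρ) (hbi : Bicombining A) (hg : Galled A)
    (n : ℕ) (hn : {v | IsLeaf A v}.ncard = n) :
    {r | IsRet A r}.ncard ≤ 2 * (n - 1) := by
  classical
  haveI : Finite V := hN.finite
  haveI : Fintype V := Fintype.ofFinite V
  have hconv : ∀ p : V → Prop, {x | p x}.ncard = (Finset.univ.filter p).card := by
    intro p
    rw [Set.ncard_eq_toFinset_card' {x | p x}, Set.toFinset_setOf]
  set Rb := Finset.univ.filter (fun r => IsRet A r) with hRb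
  set Lb := Finset.univ.filter (fun v => IsLeaf A v) with hLb
  set Hb := Finset.univ.filter (fun h => h ∈ PHd A) with hHb
  have hk : {r | IsRet A r}.ncard = Rb.card := hconv _
  have hnl : Lb.card = n := by rw [← hconv]; exact hn
  have hHcard : Hb.card = Rb.card + 1 := by
    have e1 : (PHd A).ncard = Hb.card := by
      rw [hHb, ← hconv (fun h => h ∈ PHd A), Set.setOf_mem_eq]
    rw [← e1, ← hk, phd_ncard hN hbi hg]
  have hfib : Rb.card = ∑ h ∈ Hb, (Rb.filter (fun r => FHd A r = h)).card :=
    Finset.card_eq_sum_card_fiberwise (fun r hr => by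
      simp only [hRb, hHb, Finset.coe_filter, Set.mem_setOf_eq, Finset.mem_filter, Finset.mem_univ, true_and] at hr ⊢
      exact FHd_mem hN hbi hg hr)
  set Big := Hb.filter (fun h => 2 ≤ (Rb.filter (fun r => FHd A r = h)).card) with hBig
  set Small := Hb.filter (fun h => ¬ 2 ≤ (Rb.filter (fun r => FHd A r = h)).card) with hSmall
  have hsplit : Big.card + Small.card = Hb.card :=
    Finset.card_filter_add_card_filter_not _
  have h2c : 2 * Big.card ≤ Rb.card := by
    calc 2 * Big.card = Big.card • 2 := by rw [smul_eq_mul, mul_comm]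
    _ ≤ ∑ h ∈ Big, (Rb.filter (fun r => FHd A r = h)).card :=
        Finset.card_nsmul_le_sum Big _ 2 (fun h hh => (Finset.mem_filter.1 hh).2)
    _ ≤ ∑ h ∈ Hb, (Rb.filter (fun r => FHd A r = h)).card :=
        Finset.sum_le_sum_of_subset (Finset.filter_subset _ _)
    _ = Rb.card := hfib.symm
  have hleaf : ∀ h ∈ Small, ∃ ℓ, IsLeaf A ℓ ∧ hd A ℓ = h := by
    intro h hhS
    obtain ⟨hhH, hfs⟩ := Finset.mem_filter.1 hhS
    have hPH : h ∈ PHd A := (Finset.mem_filter.1 hhH).2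
    apply small_fiber hN hbi hg hPH
    have e : {r | IsRet A r ∧ FHd A r = h}.ncard = (Rb.filter (fun r => FHd A r = h)).card := by
      rw [hconv]
      congr 1
      rw [hRb, Finset.filter_filter]
      exact Finset.filter_congr_decidable _ _ _
    rw [e]; omega
  have hcard_small : Small.card ≤ Lb.card := by
    apply Finset.card_le_card_of_injOn
      (fun h => if hx : ∃ ℓ, IsLeaf A ℓ ∧ hd A ℓ = h then hx.choose else h)
    · intro h hhS
      obtain ⟨ℓ, hℓ⟩ := hleaf h hhS
      dsimp only
      rw [dif_pos (⟨ℓ, hℓ⟩ : ∃ ℓ, IsLeaf A ℓ ∧ hd A ℓ = h)]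
      have := (⟨ℓ, hℓ⟩ : ∃ ℓ, IsLeaf A ℓ ∧ hd A ℓ = h).choose_spec
      simp only [hLb, Finset.mem_coe, Finset.mem_filter, Finset.mem_univ, true_and]
      exact this.1
    · intro h₁ hh₁ h₂ hh₂ heq
      obtain ⟨ℓ₁, hℓ₁⟩ := hleaf h₁ (by simpa using hh₁)
      obtain ⟨ℓ₂, hℓ₂⟩ := hleaf h₂ (by simpa using hh₂)
      dsimp only at heq
      rw [dif_pos (⟨ℓ₁, hℓ₁⟩ : ∃ ℓ, IsLeaf A ℓ ∧ hd A ℓ = h₁), dif_pos (⟨ℓ₂, hℓ₂⟩ : ∃ ℓ, IsLeaf A ℓ ∧ hd A ℓ = h₂)] at heq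
      have s₁ := (⟨ℓ₁, hℓ₁⟩ : ∃ ℓ, IsLeaf A ℓ ∧ hd A ℓ = h₁).choose_spec
      have s₂ := (⟨ℓ₂, hℓ₂⟩ : ∃ ℓ, IsLeaf A ℓ ∧ hd A ℓ = h₂).choose_spec
      rw [← s₁.2, ← s₂.2, heq]
  rw [hk]
  omega

end PhyloNet
end

section
/- Let N be a galled network. Then every tree node component of N other than the component containing the root ρ(N) is below exactly one tree node component of N; consequently, the tree node components of N under the below-relation form a rooted tree. -/
namespace PhyloNet

private lemma tadj_symm {V : Type} (A : V → V → Prop) : Symmetric (TAdj A) :=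
  fun _ _ h => ⟨h.2.1, h.1, h.2.2.symm⟩

private lemma rtg_tadj_symm {V : Type} (A : V → V → Prop) :
    Symmetric (Relation.ReflTransGen (TAdj A)) :=
  fun _ _ h => by
    haveI : Std.Symm (TAdj A) := ⟨tadj_symm A⟩
    exact Std.Symm.symm _ _ h

private lemma chain'_transGen {V : Type} {A : V → V → Prop} :
    ∀ (l : List V) (a b : V), List.Chain' A (a :: l) → b ∈ l → Relation.TransGen A a b := by
  intro l
  induction l with
  | nil => intro a b _ hb; simp at hb
  | cons c l ih =>
    intro a b hch hb
    replace hch := List.isChain_cons_cons.mp hch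
    rcases List.mem_cons.mp hb with rfl | hb
    · exact Relation.TransGen.single hch.1
    · exact (Relation.TransGen.single hch.1).trans (ih c b hch.2 hb)

private lemma path_parent {V : Type} {A : V → V → Prop}
    (hacyc : ∀ v, ¬ Relation.TransGen A v v) (r : V) :
    ∀ (p : List V) (u : V), List.Chain' A p → p.head? = some u → p.getLast? = some r →
      u ≠ r →
    ∃ x, A x r ∧ x ∈ p ∧ x ≠ r ∧
      Relation.ReflTransGen (fun a b => A a b ∧ a ∈ p ∧ b ∈ p ∧ a ≠ r ∧ b ≠ r) u x ∧
      (x = u → p = [u, r]) := by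
  intro p
  induction p with
  | nil => intro u _ h; simp at h
  | cons a l ih =>
    intro u hch hhead hlast hur
    have hau : a = u := by simpa using hhead
    subst hau
    cases l with
    | nil =>
      exfalso; apply hur; simpa using hlast
    | cons b q =>
      have hch' := List.isChain_cons_cons.mp hch
      have hlast' : (b :: q).getLast? = some r := by
        rw [List.getLast?_cons_cons] at hlast; exact hlast
      by_cases hbr : b = r
      · cases q with
        | nil =>
          refine ⟨a, hbr ▸ hch'.1, List.mem_cons_self, hur,
            Relation.ReflTransGen.refl, fun _ => by rw [hbr]⟩
        | cons c q' =>
          exfalso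
          have hrq : r ∈ c :: q' := by
            rw [List.getLast?_cons_cons] at hlast'
            obtain ⟨hne, heq⟩ := List.mem_getLast?_eq_getLast (x := r) hlast'
            exact heq ▸ List.getLast_mem hne
          have : Relation.TransGen A b r := chain'_transGen (c :: q') b r hch'.2 hrq
          exact hacyc r (hbr ▸ this)
      · obtain ⟨x, hxr, hxmem, hxne, hrtg, hxeq⟩ := ih b hch'.2 rfl hlast' hbr
        refine ⟨x, hxr, List.mem_cons_of_mem _ hxmem, hxne, ?_, ?_⟩
        · refine Relation.ReflTransGen.head
            ⟨hch'.1, List.mem_cons_self,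
              List.mem_cons_of_mem _ (List.mem_cons_self), hur, hbr⟩
            (Relation.ReflTransGen.mono ?_ _ _ hrtg)
          intro x y h
          exact ⟨h.1, List.mem_cons_of_mem _ h.2.1, List.mem_cons_of_mem _ h.2.2.1,
            h.2.2.2.1, h.2.2.2.2⟩
        · intro hxa
          exfalso
          exact hacyc a (chain'_transGen (b :: q) a a hch (hxa ▸ hxmem))

private lemma tree_parents_subsingleton {V : Type} {A : V → V → Prop} {ρ : V}
    (hN : IsNetwork A ρ) {v a b : V} (hv : IsTreeNode A v) (ha : A a v) (hb : A b v) :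
    a = b := by
  haveI := hN.finite
  by_contra hne
  have hsub : ({a, b} : Set V) ⊆ {u | A u v} := by
    rintro x (rfl | rfl) <;> assumption
  have h2 : 2 ≤ inDeg A v := by
    rw [inDeg, ← Set.ncard_pair hne]
    exact Set.ncard_le_ncard hsub (Set.toFinite _)
  rcases eq_or_ne v ρ with rfl | hvρ
  · rw [hN.root_indeg] at h2; omega
  · rcases hN.degree_cond v hvρ with ⟨h1, _⟩ | hret
    · omega
    · exact hv hret

private lemma ret_parents_nonempty {V : Type} {A : V → V → Prop} {ρ : V}
    (hN : IsNetwork A ρ) {r : V} (hr : IsRet A r) : ∃ p, A p r := by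
  haveI := hN.finite
  have h := hr.1
  rw [inDeg] at h
  have : ({u | A u r}).Nonempty := Set.nonempty_of_ncard_ne_zero (by omega)
  exact this

private lemma exists_parent {V : Type} {A : V → V → Prop} {ρ : V}
    (hN : IsNetwork A ρ) {v : V} (hv : v ≠ ρ) : ∃ u, A u v := by
  haveI := hN.finite
  have h : 1 ≤ inDeg A v := by
    rcases hN.degree_cond v hv with ⟨h1, _⟩ | ⟨h2, _⟩ <;> omega
  rw [inDeg] at h
  have : ({u | A u v}).Nonempty := Set.nonempty_of_ncard_ne_zero (by omega)
  exact this

private lemma gall_parents_s11 {V : Type} {A : V → V → Prop} {ρ : V} (hN : IsNetwork A ρ)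
    (hbi : Bicombining A) (hg : Galled A) {r : V} (hr : IsRet A r) :
    ∀ q q', A q r → A q' r →
      IsTreeNode A q ∧ Relation.ReflTransGen (TAdj A) q q' := by
  haveI := hN.finite
  obtain ⟨u, hur, p₁, p₂, hp₁, hp₂, hpne, hdisj, ht₁, ht₂⟩ := hg r hr
  have hune : u ≠ r := fun h => hN.acyclic r (h ▸ hur)
  obtain ⟨x₁, hx₁r, hx₁m, hx₁ne, hrtg₁, heq₁⟩ :=
    path_parent hN.acyclic r p₁ u hp₁.1 hp₁.2.1 hp₁.2.2 hune
  obtain ⟨x₂, hx₂r, hx₂m, hx₂ne, hrtg₂, heq₂⟩ :=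
    path_parent hN.acyclic r p₂ u hp₂.1 hp₂.2.1 hp₂.2.2 hune
  have hxne : x₁ ≠ x₂ := by
    intro h
    have hx₁m₂ : x₁ ∈ p₂ := by rw [h]; exact hx₂m
    rcases hdisj x₁ hx₁m hx₁m₂ with h1 | h1
    · exact hpne ((heq₁ h1).trans (heq₂ (h.symm.trans h1)).symm)
    · exact hx₁ne h1
  have tx₁ : IsTreeNode A x₁ := ht₁ x₁ hx₁m hx₁ne
  have tx₂ : IsTreeNode A x₂ := ht₂ x₂ hx₂m hx₂ne
  have hru₁ : Relation.ReflTransGen (TAdj A) u x₁ := by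
    refine Relation.ReflTransGen.mono ?_ _ _ hrtg₁
    intro a b h
    exact ⟨ht₁ a h.2.1 h.2.2.2.1, ht₁ b h.2.2.1 h.2.2.2.2, Or.inl h.1⟩
  have hru₂ : Relation.ReflTransGen (TAdj A) u x₂ := by
    refine Relation.ReflTransGen.mono ?_ _ _ hrtg₂
    intro a b h
    exact ⟨ht₂ a h.2.1 h.2.2.2.1, ht₂ b h.2.2.1 h.2.2.2.2, Or.inl h.1⟩
  have hP : ({x₁, x₂} : Set V) = {x | A x r} := by
    apply Set.eq_of_subset_of_ncard_le
    · rintro x (rfl | rfl) <;> assumption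
    · rw [Set.ncard_pair hxne]
      exact le_of_eq (hbi r hr)
    · exact Set.toFinite _
  have conn : ∀ z, A z r → IsTreeNode A z ∧ Relation.ReflTransGen (TAdj A) u z := by
    intro z hz
    have : z ∈ ({x₁, x₂} : Set V) := hP ▸ hz
    rcases this with rfl | rfl
    · exact ⟨tx₁, hru₁⟩
    · exact ⟨tx₂, hru₂⟩
  intro q q' hq hq'
  exact ⟨(conn q hq).1, ((rtg_tadj_symm A) (conn q hq).2).trans (conn q' hq').2⟩

private lemma tnc_tree {V : Type} {A : V → V → Prop} {S : Set V} (hS : IsTNC A S) :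
    ∀ v ∈ S, IsTreeNode A v := by
  obtain ⟨u, hu, rfl⟩ := hS
  intro v hv
  induction hv with
  | refl => exact hu
  | tail _ h ih => exact h.2.1

private lemma tnc_eq {V : Type} {A : V → V → Prop} {S : Set V} (hS : IsTNC A S)
    {x : V} (hx : x ∈ S) : S = {v | Relation.ReflTransGen (TAdj A) x v} := by
  obtain ⟨u, hu, rfl⟩ := hS
  ext v
  exact ⟨fun h => ((rtg_tadj_symm A) hx).trans h, fun h => hx.trans h⟩

private lemma exists_comproot {V : Type} {A : V → V → Prop} {ρ : V}
    (hN : IsNetwork A ρ) {C : Set V} (hC : IsTNC A C) : ∃ c, CompRoot A C c := by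
  haveI := hN.finite
  haveI : IsIrrefl V (Relation.TransGen A) := ⟨hN.acyclic⟩
  haveI : IsTrans V (Relation.TransGen A) := ⟨fun _ _ _ => Relation.TransGen.trans⟩
  have hwf : WellFounded A :=
    Subrelation.wf (fun {a b} h => Relation.TransGen.single h)
      (Finite.wellFounded_of_trans_of_irrefl (Relation.TransGen A))
  obtain ⟨u, hu, rfl⟩ := hC
  obtain ⟨c, hcC, hmin⟩ := hwf.has_min {v | Relation.ReflTransGen (TAdj A) u v}
    ⟨u, Relation.ReflTransGen.refl⟩
  refine ⟨c, hcC, fun t ht hAt => ?_⟩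
  have hctree : IsTreeNode A c := tnc_tree ⟨u, hu, rfl⟩ c hcC
  have : t ∈ {v | Relation.ReflTransGen (TAdj A) u v} :=
    hcC.tail ⟨hctree, ht, Or.inr hAt⟩
  exact hmin t this hAt

private lemma comproot_step {V : Type} {A : V → V → Prop} {ρ : V} (hN : IsNetwork A ρ)
    {C : Set V} {c : V} (hc : CompRoot A C c) :
    ∀ v, Relation.ReflTransGen (TAdj A) c v →
      Relation.ReflTransGen (fun a b => TAdj A a b ∧ A a b) c v := by
  intro v h
  induction h with
  | refl => exact Relation.ReflTransGen.refl
  | @tail b d hcb hbd ih =>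
    rcases hbd with ⟨tb, td, hA | hA⟩
    · exact ih.tail ⟨⟨tb, td, Or.inl hA⟩, hA⟩
    · rcases Relation.ReflTransGen.cases_tail ih with h | ⟨t, hct, htb⟩
      · exact absurd (h ▸ hA) (hc.2 d td)
      · have hted : t = d := tree_parents_subsingleton hN tb htb.2 hA
        exact hted ▸ hct

private lemma comproot_unique {V : Type} {A : V → V → Prop} {ρ : V}
    (hN : IsNetwork A ρ) {C : Set V} (hC : IsTNC A C)
    {c₁ c₂ : V} (h₁ : CompRoot A C c₁) (h₂ : CompRoot A C c₂) : c₁ = c₂ := by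
  have h12 : Relation.ReflTransGen (TAdj A) c₁ c₂ := by
    obtain ⟨u, hu, rfl⟩ := hC
    exact ((rtg_tadj_symm A) h₁.1).trans h₂.1
  have h21 : Relation.ReflTransGen (TAdj A) c₂ c₁ := (rtg_tadj_symm A) h12
  have r12 : Relation.ReflTransGen A c₁ c₂ :=
    Relation.ReflTransGen.mono (fun a b h => h.2) _ _ (comproot_step hN h₁ c₂ h12)
  have r21 : Relation.ReflTransGen A c₂ c₁ :=
    Relation.ReflTransGen.mono (fun a b h => h.2) _ _ (comproot_step hN h₂ c₁ h21)
  by_contra hne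
  rcases Relation.ReflTransGen.cases_head r12 with h | ⟨m, hm1, hm2⟩
  · exact hne h
  · exact hN.acyclic c₁ ((Relation.TransGen.head' hm1 hm2).trans_left r21)

/-- In a galled network, every tree node component other than the one containing the
root is below exactly one tree node component (so the components form a rooted tree
under the below-relation). -/
theorem galled_component_unique_parent {V : Type} (A : V → V → Prop) (ρ : V)
    (hN : IsNetwork A ρ) (hbi : Bicombining A) (hg : Galled A)
    (C : Set V) (hC : IsTNC A C) (hρ : ρ ∉ C) :
    ∃! C'' : Set V, IsTNC A C'' ∧ Below A C C'' := by
  haveI := hN.finite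
  obtain ⟨c, hc⟩ := exists_comproot hN hC
  have hcC : c ∈ C := hc.1
  have hctree : IsTreeNode A c := tnc_tree hC c hcC
  have hcρ : c ≠ ρ := fun h => hρ (h ▸ hcC)
  obtain ⟨r, hrc⟩ := exists_parent hN hcρ
  have hrret : IsRet A r := not_not.mp (fun h => hc.2 r h hrc)
  obtain ⟨p, hpr⟩ := ret_parents_nonempty hN hrret
  have hptree : IsTreeNode A p := (gall_parents_s11 hN hbi hg hrret p p hpr hpr).1
  refine ⟨{v | Relation.ReflTransGen (TAdj A) p v},
    ⟨⟨p, hptree, rfl⟩, r, hrret, ⟨c, hrc, hc⟩, p, Relation.ReflTransGen.refl, hpr⟩, ?_⟩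
  rintro C₂ ⟨hC₂, r₂, hret₂, ⟨c₂, hr₂c₂, hc₂⟩, p₂, hp₂C₂, hp₂r₂⟩
  have hceq : c₂ = c := comproot_unique hN hC hc₂ hc
  have hr₂c : A r₂ c := hceq ▸ hr₂c₂
  have hreq : r₂ = r := tree_parents_subsingleton hN hctree hr₂c hrc
  have hp₂r : A p₂ r := hreq ▸ hp₂r₂
  have hconn : Relation.ReflTransGen (TAdj A) p p₂ :=
    (gall_parents_s11 hN hbi hg hrret p p₂ hpr hp₂r).2
  rw [tnc_eq hC₂ hp₂C₂]
  ext v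
  exact ⟨fun h => hconn.trans h, fun h => ((rtg_tadj_symm A) hconn).trans h⟩

end PhyloNet
end

section
/- Let N be a reticulation-visible network and let C be a lowest big tree node component of N. Then the root ρ(C) of C is visible on every leaf in L_C. -/
namespace PhyloNet

section Aux

variable {V : Type} {A : V → V → Prop} {ρ u v w x r : V} {p q : List V}

/- ### degree helpers -/

private lemma no_parent_of_indeg_zero (hfin : Finite V) (h : inDeg A v = 0) : ¬ A u v := by
  intro hu
  have he : ({z | A z v} : Set V) = ∅ := by
    have := Set.ncard_eq_zero (s := {z | A z v}) (Set.toFinite _)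
    exact this.mp h
  have : u ∈ ({z | A z v} : Set V) := hu
  rw [he] at this
  exact this

private lemma parent_eq (h : inDeg A v = 1) (h1 : A u v) (h2 : A w v) : u = w := by
  obtain ⟨a, ha⟩ := Set.ncard_eq_one.mp h
  have e1 : u ∈ ({z | A z v} : Set V) := h1
  have e2 : w ∈ ({z | A z v} : Set V) := h2
  rw [ha] at e1 e2
  simp at e1 e2
  rw [e1, e2]

private lemma child_eq (h : outDeg A v = 1) (h1 : A v u) (h2 : A v w) : u = w := by
  obtain ⟨a, ha⟩ := Set.ncard_eq_one.mp h
  have e1 : u ∈ ({z | A v z} : Set V) := h1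
  have e2 : w ∈ ({z | A v z} : Set V) := h2
  rw [ha] at e1 e2
  simp at e1 e2
  rw [e1, e2]

private lemma second_parent (h : 2 ≤ inDeg A v) (hr : A r v) :
    ∃ q, A q v ∧ q ≠ r := by
  have h' : 1 < ({z | A z v} : Set V).ncard := lt_of_lt_of_le one_lt_two h
  obtain ⟨b, hb, hne⟩ := Set.exists_ne_of_one_lt_ncard h' r
  exact ⟨b, hb, hne⟩

private lemma exists_parent_s12 (h : 2 ≤ inDeg A v) : ∃ q, A q v := by
  have h' : ({z | A z v} : Set V).ncard ≠ 0 := by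
    have : 2 ≤ ({z | A z v} : Set V).ncard := h
    omega
  obtain ⟨b, hb⟩ := Set.nonempty_of_ncard_ne_zero h'
  exact ⟨b, hb⟩

/-- a non-root tree node has indegree 1. -/
private lemma indeg_one_of_treeNode (hN : IsNetwork A ρ) (hv : v ≠ ρ)
    (ht : IsTreeNode A v) : inDeg A v = 1 := by
  rcases hN.degree_cond v hv with ⟨h1, _⟩ | h2
  · exact h1
  · exact absurd h2 ht

/- ### path helpers -/

private lemma isPath_rtg : ∀ (p : List V) (u v : V), IsPath A u v p →
    Relation.ReflTransGen A u v := by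
  intro p
  induction p with
  | nil => intro u v h; simp [IsPath] at h
  | cons a l ih =>
    intro u v h
    obtain ⟨hc, hh, hl⟩ := h
    simp at hh
    subst hh
    cases l with
    | nil =>
      simp at hl
      subst hl
      exact Relation.ReflTransGen.refl
    | cons b t =>
      rw [List.Chain', List.isChain_cons_cons] at hc
      rw [List.getLast?_cons_cons] at hl
      exact Relation.ReflTransGen.head hc.1 (ih b v ⟨hc.2, rfl, hl⟩)

private lemma exists_isPath (h : Relation.ReflTransGen A u v) :
    ∃ p, IsPath A u v p := by
  induction h with
  | refl => exact ⟨[u], by simp [IsPath, List.Chain']⟩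
  | tail _ step ih =>
    obtain ⟨p, hc, hh, hl⟩ := ih
    rename_i b c _
    refine ⟨p ++ [c], ?_, ?_, ?_⟩
    · rw [List.Chain', List.isChain_append]
      refine ⟨hc, by simp, ?_⟩
      intro y hy z hz
      simp at hz
      subst hz
      rw [hl] at hy
      simp at hy
      subst hy
      exact step
    · cases p with
      | nil => simp at hh
      | cons a t => simpa using hh
    · simp [List.getLast?_concat]

private lemma isPath_append (h1 : IsPath A u v p) (h2 : IsPath A x w q)
    (hvx : A v x) : IsPath A u w (p ++ q) := by
  obtain ⟨hc1, hh1, hl1⟩ := h1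
  obtain ⟨hc2, hh2, hl2⟩ := h2
  refine ⟨?_, ?_, ?_⟩
  · rw [List.Chain', List.isChain_append]
    refine ⟨hc1, hc2, ?_⟩
    intro a ha b hb
    rw [hl1] at ha; rw [hh2] at hb
    simp at ha hb; subst ha; subst hb; exact hvx
  · cases p with
    | nil => simp at hh1
    | cons a t => simpa using hh1
  · rw [List.getLast?_append_of_ne_nil]
    · exact hl2
    · intro h; subst h; simp at hh2

private lemma isPath_split (h : IsPath A u v p) (ha : r ∈ p) :
    ∃ p₁ p₂, p = p₁ ++ r :: p₂ ∧ IsPath A u r (p₁ ++ [r]) ∧ IsPath A r v (r :: p₂) := by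
  obtain ⟨p₁, p₂, rfl⟩ := List.append_of_mem ha
  obtain ⟨hc, hh, hl⟩ := h
  have hc' : (p₁ ++ [r]).Chain' A ∧ (r :: p₂).Chain' A := by
    have : p₁ ++ r :: p₂ = (p₁ ++ [r]) ++ p₂ := by simp
    rw [this, List.Chain', List.isChain_append] at hc
    constructor
    · exact hc.1
    · rcases hc with ⟨h1, h2, h3⟩
      cases p₂ with
      | nil => simp [List.Chain']
      | cons b t =>
        rw [List.Chain', List.isChain_cons_cons]
        refine ⟨?_, h2⟩
        exact h3 r (by simp [List.getLast?_concat]) b (by simp)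
  refine ⟨p₁, p₂, rfl, ⟨hc'.1, ?_, by simp [List.getLast?_concat]⟩, ⟨hc'.2, by simp, ?_⟩⟩
  · cases p₁ with
    | nil =>
      simp at hh ⊢
      simpa using hh
    | cons a t => simpa using hh
  · rw [← hl, List.getLast?_append_cons]

private lemma path_pred (h : IsPath A u v p) (hne : v ≠ u) :
    ∃ q w, p = q ++ [v] ∧ A w v ∧ IsPath A u w q := by
  obtain ⟨hc, hh, hl⟩ := h
  have hpne : p ≠ [] := fun h' => by subst h'; simp at hh
  obtain ⟨q, hp⟩ : ∃ q, q ++ [v] = p := by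
    refine ⟨p.dropLast, ?_⟩
    have hl' : p.getLast hpne = v := by
      rw [List.getLast?_eq_getLast_of_ne_nil hpne] at hl
      simpa using hl
    rw [← hl']
    exact List.dropLast_append_getLast hpne
  rw [← hp] at hh hc ⊢
  cases q with
  | nil =>
    simp at hh
    exact absurd hh hne
  | cons a t =>
    rw [List.Chain', List.isChain_append] at hc
    obtain ⟨w, hwl⟩ : ∃ w, (a :: t).getLast? = some w :=
      ⟨_, List.getLast?_eq_getLast_of_ne_nil (by simp)⟩
    exact ⟨a :: t, w, rfl, hc.2.2 w hwl v (by simp), hc.1, by simpa using hh, hwl⟩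

private lemma mem_of_getLast?' (h : p.getLast? = some v) : v ∈ p := by
  have := List.dropLast_append_getLast? v h
  rw [← this]
  simp

/- ### tree node component helpers -/

private lemma tadj_symm_s12 (h : TAdj A u v) : TAdj A v u :=
  ⟨h.2.1, h.1, h.2.2.symm⟩

private lemma rtg_tadj_symm_s12 (h : Relation.ReflTransGen (TAdj A) u v) :
    Relation.ReflTransGen (TAdj A) v u := by
  induction h with
  | refl => exact Relation.ReflTransGen.refl
  | tail _ step ih => exact Relation.ReflTransGen.head (tadj_symm_s12 step) ih

private lemma treeNode_of_tadj_reach (hu : IsTreeNode A u)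
    (h : Relation.ReflTransGen (TAdj A) u v) : IsTreeNode A v := by
  rcases h.cases_tail with h' | ⟨c, _, hc⟩
  · rwa [h']
  · exact hc.2.1

/-- descend: from a node with no tree-node parent, undirected tree-component
reachability implies directed reachability. -/
private lemma reach_of_tadj_reach (hN : IsNetwork A ρ)
    {a : V} (ha : ∀ z, IsTreeNode A z → ¬ A z a)
    (h : Relation.ReflTransGen (TAdj A) a x) : Relation.ReflTransGen A a x := by
  haveI := hN.finite
  induction h with
  | refl => exact Relation.ReflTransGen.refl
  | tail hax step ih =>
    rename_i b c
    rcases step.2.2 with hbc | hcb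
    · exact ih.tail hbc
    · -- c is a tree-node parent of b; go to the unique parent of b
      have hba : b ≠ a := by
        intro h'; subst h'
        exact ha c step.2.1 hcb
      have htb : Relation.TransGen A a b := by
        rcases (Relation.reflTransGen_iff_eq_or_transGen.mp ih) with h' | h'
        · exact absurd h' hba
        · exact h'
      obtain ⟨w, hw1, hw2⟩ := Relation.TransGen.tail'_iff.mp htb
      have hbρ : b ≠ ρ := by
        intro h'; subst h'
        exact no_parent_of_indeg_zero hN.finite hN.root_indeg hcb
      have hdeg : inDeg A b = 1 := indeg_one_of_treeNode hN hbρ step.1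
      have : w = c := parent_eq hdeg hw2 hcb
      rwa [this] at hw1

end Aux

section Comp

variable {V : Type} {A : V → V → Prop} {ρ u₀ rC v : V}

/-- Every non-root member of the component has a unique parent, which is a
tree node in the component. -/
private lemma comp_parent_mem (hN : IsNetwork A ρ) (hu₀ : IsTreeNode A u₀)
    (hrC1 : Relation.ReflTransGen (TAdj A) u₀ rC)
    (hrC2 : ∀ z, IsTreeNode A z → ¬ A z rC)
    (hv : Relation.ReflTransGen (TAdj A) u₀ v) (hne : v ≠ rC) :
    ∃ w, A w v ∧ Relation.ReflTransGen (TAdj A) u₀ w ∧ (∀ z, A z v → z = w) := by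
  haveI := hN.finite
  have htv : IsTreeNode A v := treeNode_of_tadj_reach hu₀ hv
  -- v must have a tree-node parent, else it would equal rC
  have hpar : ∃ z, IsTreeNode A z ∧ A z v := by
    by_contra hno
    push_neg at hno
    -- then v has no tree-node parent, so v = rC by root uniqueness
    have h1 : Relation.ReflTransGen A v rC :=
      reach_of_tadj_reach hN (fun z hz hzv => hno z hz hzv)
        ((rtg_tadj_symm_s12 hv).trans hrC1)
    have h2 : Relation.ReflTransGen A rC v :=
      reach_of_tadj_reach hN hrC2 ((rtg_tadj_symm_s12 hrC1).trans hv)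
    rcases Relation.reflTransGen_iff_eq_or_transGen.mp h1 with h' | h'
    · exact hne h'.symm
    · exact hN.acyclic v (h'.trans_left h2)
  obtain ⟨z, hz1, hz2⟩ := hpar
  have hvρ : v ≠ ρ := by
    intro h'; subst h'
    exact no_parent_of_indeg_zero hN.finite hN.root_indeg hz2
  have hdeg : inDeg A v = 1 := indeg_one_of_treeNode hN hvρ htv
  refine ⟨z, hz2, hv.tail ⟨htv, hz1, Or.inr hz2⟩, fun y hy => parent_eq hdeg hy hz2⟩

/-- Core visibility lemma: every directed path from the root to a member of the
component contains the component root. -/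
private lemma visible_core (hN : IsNetwork A ρ) (hu₀ : IsTreeNode A u₀)
    (hrC1 : Relation.ReflTransGen (TAdj A) u₀ rC)
    (hrC2 : ∀ z, IsTreeNode A z → ¬ A z rC) :
    ∀ (n : ℕ) (p : List V) (v : V), p.length ≤ n → IsPath A ρ v p →
      Relation.ReflTransGen (TAdj A) u₀ v → rC ∈ p := by
  haveI := hN.finite
  intro n
  induction n with
  | zero =>
    intro p v hlen hp _
    have : p = [] := List.length_eq_zero_iff.mp (Nat.le_zero.mp hlen)
    subst this
    simp [IsPath] at hp
  | succ n ih =>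
    intro p v hlen hp hv
    by_cases hvr : v = rC
    · subst hvr
      exact mem_of_getLast?' hp.2.2
    · obtain ⟨w, hwv, hwC, _⟩ := comp_parent_mem hN hu₀ hrC1 hrC2 hv hvr
      have hvρ : v ≠ ρ := by
        intro h'; subst h'
        exact no_parent_of_indeg_zero hN.finite hN.root_indeg hwv
      obtain ⟨q, w', hpq, hw'v, hq⟩ := path_pred hp hvρ
      have hw' : w' = w := by
        have htv : IsTreeNode A v := treeNode_of_tadj_reach hu₀ hv
        exact parent_eq (indeg_one_of_treeNode hN hvρ htv) hw'v hwv
      rw [hw'] at hq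
      have hlq : q.length ≤ n := by
        subst hpq
        simp at hlen
        omega
      have := ih q w hlq hq hwC
      subst hpq
      exact List.mem_append_left _ this

end Comp

section Ret

variable {V : Type} {A : V → V → Prop} {ρ r x : V}

/-- If `r`'s only out-neighbour is `x` and a path ends strictly after `r`,
then there is a path from `x` to the same endpoint avoiding `r`. -/
private lemma path_after_r (hacyc : ∀ v, ¬ Relation.TransGen A v v)
    (honly : ∀ y, A r y → y = x) (hrx : A r x)
    {u b : V} {P : List V} (h : IsPath A u b P) (hmem : r ∈ P) (hneb : b ≠ r) :
    ∃ P₂, IsPath A x b P₂ ∧ r ∉ P₂ := by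
  obtain ⟨P₁, P₂, rfl, _, hsuf⟩ := isPath_split h hmem
  cases P₂ with
  | nil =>
    exfalso
    have := hsuf.2.2
    simp at this
    exact hneb this.symm
  | cons c t =>
    have hc : A r c := (List.isChain_cons_cons.mp hsuf.1).1
    have hcx : c = x := honly c hc
    have hP2 : IsPath A x b (c :: t) := by
      refine ⟨(List.isChain_cons_cons.mp hsuf.1).2, by simp [hcx], ?_⟩
      rw [← hsuf.2.2, List.getLast?_cons_cons]
    refine ⟨c :: t, hP2, ?_⟩
    intro hrm
    obtain ⟨_, _, _, hpref, _⟩ := isPath_split hP2 hrm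
    have : Relation.ReflTransGen A x r := isPath_rtg _ _ _ hpref
    exact hacyc r (Relation.TransGen.head' hrx this)

/-- In a reticulation-visible network, the child of a reticulation is not a
reticulation. -/
private lemma child_not_ret (hN : IsNetwork A ρ) (hRV : RetVisible A ρ)
    (hr : IsRet A r) (hrx : A r x) : ¬ IsRet A x := by
  haveI := hN.finite
  intro hx
  obtain ⟨ℓ, hℓ, hvis⟩ := hRV r hr
  have honly : ∀ y, A r y → y = x := fun y hy => child_eq hr.2 hy hrx
  have hℓr : ℓ ≠ r := by
    intro h'; subst h'
    have h1 := hr.2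
    have h2 := hℓ.2
    omega
  obtain ⟨q, hqx, hqr⟩ := second_parent hx.1 hrx
  obtain ⟨P, hP⟩ := exists_isPath (hN.reach_from_root ℓ)
  obtain ⟨P₂, hP₂, hrP₂⟩ := path_after_r hN.acyclic honly hrx hP (hvis P hP) hℓr
  obtain ⟨Q, hQ⟩ := exists_isPath (hN.reach_from_root q)
  have hrQ : r ∉ Q := by
    intro hm
    obtain ⟨Q₂, hQ₂, _⟩ := path_after_r hN.acyclic honly hrx hQ hm hqr
    exact hN.acyclic x (Relation.TransGen.tail' (isPath_rtg _ _ _ hQ₂) hqx)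
  have hfull := hvis (Q ++ P₂) (isPath_append hQ hP₂ hqx)
  rcases List.mem_append.mp hfull with h' | h'
  · exact hrQ h'
  · exact hrP₂ h'

end Ret
/-- In a reticulation-visible network, the root of a lowest big tree node component `C`
is visible on every leaf in `L_C`. -/
theorem root_of_lowest_visible_on_LC {V : Type} (A : V → V → Prop) (ρ : V)
    (hN : IsNetwork A ρ) (hRV : RetVisible A ρ)
    (C : Set V) (rC : V) (hC : LowestBig A C) (hrC : CompRoot A C rC) :
    ∀ ℓ ∈ LCset A C, Visible A ρ rC ℓ := by
  haveI := hN.finite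
  obtain ⟨⟨⟨u₀, hu₀, hCeq⟩, -⟩, -⟩ := hC
  subst hCeq
  obtain ⟨hrC1, hrC2⟩ := hrC
  intro ℓ hℓ
  rcases hℓ with ⟨hmem, -⟩ | ⟨r, ⟨hret, hpar⟩, hrℓ⟩
  · intro p hp
    exact visible_core hN hu₀ hrC1 hrC2 p.length p ℓ le_rfl hp hmem
  · have hnx : ¬ IsRet A ℓ := child_not_ret hN hRV hret hrℓ
    have hℓρ : ℓ ≠ ρ := fun h' =>
      no_parent_of_indeg_zero hN.finite hN.root_indeg (h' ▸ hrℓ)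
    have hdegℓ : inDeg A ℓ = 1 := indeg_one_of_treeNode hN hℓρ hnx
    have hrρ : r ≠ ρ := by
      obtain ⟨w₀, hw₀⟩ := exists_parent_s12 hret.1
      intro h'; subst h'
      exact no_parent_of_indeg_zero hN.finite hN.root_indeg hw₀
    intro p hp
    obtain ⟨q, w, rfl, hwℓ, hq⟩ := path_pred hp hℓρ
    have hwr : w = r := parent_eq hdegℓ hwℓ hrℓ
    rw [hwr] at hq
    obtain ⟨q', w', hqq, hw'r, hq'⟩ := path_pred hq hrρ
    have hw'C : Relation.ReflTransGen (TAdj A) u₀ w' := hpar w' hw'r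
    have hmem' := visible_core hN hu₀ hrC1 hrC2 q'.length q' w' le_rfl hq' hw'C
    rw [hqq]
    exact List.mem_append_left _ (List.mem_append_left _ hmem')

end PhyloNet
end
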